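/- arXiv:1807.02506 — 2 statements merged into one kernel-verified Lean document; each statement's English description precedes it below -/
import Mathlib

section
/- With the notation M_d, r_d, R_d as above and R_d' = lcm(R_d, r_d²), one has M_d² · R_d' = lcm(q, d²). -/
open Finset


lemma fact_prod_pow {s : Finset ℕ} (hs : ∀ q ∈ s, Nat.Prime q) (f : ℕ → ℕ) (p : ℕ) :
    (∏ q ∈ s, q ^ f q).factorization p = if p ∈ s then f p else 0 := by
  rw [Nat.factorization_prod (fun q hq => pow_ne_zero _ (hs q hq).pos.ne')]
  rw [Finsupp.finset_sum_apply]
  rw [Finset.sum_congr rfl (fun q hq => by rw [(hs q hq).factorization_pow])]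
  simp [Finsupp.single_apply, Finset.sum_ite_eq']


/-- `M_d = ∏_{p ∣ d, v_p(d) ≥ v_p(q)} p^{v_p(d)}`. -/
def Md (q d : ℕ) : ℕ :=
  ∏ p ∈ d.primeFactors.filter (fun p => q.factorization p ≤ d.factorization p),
    p ^ d.factorization p

/-- `r_d = ∏_{p ∣ d, v_p(d) < v_p(q)} p^{v_p(d)}`. -/
def rd (q d : ℕ) : ℕ :=
  ∏ p ∈ d.primeFactors.filter (fun p => d.factorization p < q.factorization p),
    p ^ d.factorization p

/-- `R_d = ∏_{p ∣ gcd(q, r_d)} p^{v_p(q)} ⬝ ∏_{p ∣ q, p ∤ d} p^{v_p(q)}`. -/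
def Rd (q d : ℕ) : ℕ :=
  (∏ p ∈ (Nat.gcd q (rd q d)).primeFactors, p ^ q.factorization p) *
    ∏ p ∈ q.primeFactors.filter (fun p => ¬ p ∣ d), p ^ q.factorization p

/-- `R_d' = lcm(R_d, r_d²)`. -/
def Rd' (q d : ℕ) : ℕ := Nat.lcm (Rd q d) (rd q d ^ 2)

theorem stmt6 (q d : ℕ) (hq : 0 < q) (hd : 0 < d) :
    Md q d ^ 2 * Rd' q d = Nat.lcm q (d ^ 2) := by
  have hMd : Md q d ≠ 0 := Finset.prod_ne_zero_iff.mpr (fun p hp =>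
    pow_ne_zero _ (Nat.prime_of_mem_primeFactors (Finset.mem_filter.mp hp).1).pos.ne')
  have hrd : rd q d ≠ 0 := Finset.prod_ne_zero_iff.mpr (fun p hp =>
    pow_ne_zero _ (Nat.prime_of_mem_primeFactors (Finset.mem_filter.mp hp).1).pos.ne')
  have hRd : Rd q d ≠ 0 := mul_ne_zero
    (Finset.prod_ne_zero_iff.mpr (fun p hp =>
      pow_ne_zero _ (Nat.prime_of_mem_primeFactors hp).pos.ne'))
    (Finset.prod_ne_zero_iff.mpr (fun p hp =>
      pow_ne_zero _ (Nat.prime_of_mem_primeFactors (Finset.mem_filter.mp hp).1).pos.ne'))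
  have hRd' : Rd' q d ≠ 0 := Nat.lcm_ne_zero hRd (pow_ne_zero _ hrd)
  refine Nat.eq_of_factorization_eq (mul_ne_zero (pow_ne_zero 2 hMd) hRd')
    (Nat.lcm_ne_zero hq.ne' (pow_ne_zero 2 hd.ne')) fun p => ?_
  by_cases hp : p.Prime
  · have hrdfact : (rd q d).factorization p =
        if p ∈ d.primeFactors.filter (fun p => d.factorization p < q.factorization p)
        then d.factorization p else 0 :=
      fact_prod_pow (fun r hr => Nat.prime_of_mem_primeFactors (Finset.mem_filter.mp hr).1) _ p
    have hMdfact : (Md q d).factorization p =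
        if p ∈ d.primeFactors.filter (fun p => q.factorization p ≤ d.factorization p)
        then d.factorization p else 0 :=
      fact_prod_pow (fun r hr => Nat.prime_of_mem_primeFactors (Finset.mem_filter.mp hr).1) _ p
    have hRdfact : (Rd q d).factorization p =
        (if p ∈ (Nat.gcd q (rd q d)).primeFactors then q.factorization p else 0) +
        (if p ∈ q.primeFactors.filter (fun p => ¬ p ∣ d) then q.factorization p else 0) := by
      rw [Rd, Nat.factorization_mul, Finsupp.add_apply,
        fact_prod_pow (fun r hr => Nat.prime_of_mem_primeFactors hr) _ p,
        fact_prod_pow (fun r hr => Nat.prime_of_mem_primeFactors (Finset.mem_filter.mp hr).1) _ p]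
      · exact Finset.prod_ne_zero_iff.mpr (fun r hr =>
          pow_ne_zero _ (Nat.prime_of_mem_primeFactors hr).pos.ne')
      · exact Finset.prod_ne_zero_iff.mpr (fun r hr =>
          pow_ne_zero _ (Nat.prime_of_mem_primeFactors (Finset.mem_filter.mp hr).1).pos.ne')
    rw [Nat.factorization_mul (pow_ne_zero 2 hMd) hRd', Finsupp.add_apply,
      Nat.factorization_pow, Finsupp.smul_apply, Rd',
      Nat.factorization_lcm hRd (pow_ne_zero 2 hrd), Finsupp.sup_apply,
      Nat.factorization_pow, Finsupp.smul_apply,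
      Nat.factorization_lcm hq.ne' (pow_ne_zero 2 hd.ne'), Finsupp.sup_apply,
      Nat.factorization_pow, Finsupp.smul_apply,
      hMdfact, hRdfact, hrdfact]
    have hgcdmem : p ∈ (Nat.gcd q (rd q d)).primeFactors ↔
        (p ∈ q.primeFactors ∧ p ∈ (rd q d).primeFactors) := by
      rw [Nat.primeFactors_gcd hq.ne' hrd, Finset.mem_inter]
    have hrdmem : p ∈ (rd q d).primeFactors ↔ (rd q d).factorization p ≠ 0 := by
      rw [← Nat.support_factorization, Finsupp.mem_support_iff]
    have hdmem : p ∈ d.primeFactors ↔ p ∣ d := by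
      rw [Nat.mem_primeFactors]
      exact ⟨fun h => h.2.1, fun h => ⟨hp, h, hd.ne'⟩⟩
    have hqmem : p ∈ q.primeFactors ↔ p ∣ q := by
      rw [Nat.mem_primeFactors]
      exact ⟨fun h => h.2.1, fun h => ⟨hp, h, hq.ne'⟩⟩
    have hdvd_d : p ∣ d ↔ d.factorization p ≠ 0 := by
      exact ⟨fun h => (Nat.Prime.factorization_pos_of_dvd hp hd.ne' h).ne', fun h => Nat.dvd_of_factorization_pos h⟩
    have hdvd_q : p ∣ q ↔ q.factorization p ≠ 0 := by
      exact ⟨fun h => (Nat.Prime.factorization_pos_of_dvd hp hq.ne' h).ne', fun h => Nat.dvd_of_factorization_pos h⟩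
    simp only [hgcdmem, hrdmem, hrdfact, Finset.mem_filter, hdmem, hqmem, hdvd_d, hdvd_q,
      smul_eq_mul]
    split_ifs <;> omega
  · simp [Nat.factorization_eq_zero_of_not_prime _ hp]
end

section
/- Let a : ℕ → ℂ satisfy |a(m)| ≤ m^{1/2+ε₀} for some fixed ε₀ ∈ (0, 1/4), let M ≥ 2 be an integer, X > 1, and let ĥ : ℤ → ℂ satisfy |ĥ(n)| ≤ 1/(1+|n|). Then |∑_{|n| ≤ M/2} ĥ(n) ∑_{m ≡ ±n (mod M), m ≠ ±n, 0 < m ≤ X} a(m)/m| ≤ C X^{1/2+2ε₀} M^{−1} log(M) for an absolute constant C. -/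
open Real Finset

lemma aux_harm (M : ℕ) (hM : 2 ≤ M) :
    ∑ n ∈ Finset.Icc (-(M:ℤ)) (M:ℤ), (1 + (|n|:ℝ))⁻¹ ≤ 8 * Real.log M := by
  have hharm : ∑ i ∈ Finset.range (M+1), (1+(i:ℝ))⁻¹ ≤ 1 + Real.log (M+1) := by
    have h := harmonic_le_one_add_log (M+1)
    rw [harmonic] at h
    push_cast at h
    calc ∑ i ∈ Finset.range (M+1), (1+(i:ℝ))⁻¹
        = ∑ i ∈ Finset.range (M+1), ((i:ℝ)+1)⁻¹ := by
          apply Finset.sum_congr rfl; intro i _; ring_nf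
      _ ≤ 1 + Real.log (M+1) := h
  have hsplit : Finset.Icc (-(M:ℤ)) (M:ℤ) =
      (Finset.Icc (-(M:ℤ)) (-1)) ∪ (Finset.Icc (0:ℤ) (M:ℤ)) := by
    ext x; simp only [Finset.mem_Icc, Finset.mem_union]; omega
  have hdisj : Disjoint (Finset.Icc (-(M:ℤ)) (-1)) (Finset.Icc (0:ℤ) (M:ℤ)) := by
    rw [Finset.disjoint_left]; intro x hx hy
    simp only [Finset.mem_Icc] at hx hy; omega
  rw [hsplit, Finset.sum_union hdisj]
  have habs : ∀ n : ℤ, (1 + (|n|:ℝ))⁻¹ = (1 + (n.natAbs:ℝ))⁻¹ := by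
    intro n; rw [Nat.cast_natAbs]; push_cast; ring_nf
  have h1 : ∑ n ∈ Finset.Icc (-(M:ℤ)) (-1), (1 + (|n|:ℝ))⁻¹
      = ∑ i ∈ Finset.Icc 1 M, (1 + (i:ℝ))⁻¹ := by
    refine Finset.sum_nbij' (fun n => n.natAbs) (fun i => -(i:ℤ)) ?_ ?_ ?_ ?_ ?_
    · intro n hn; simp only [Finset.mem_Icc] at hn ⊢; omega
    · intro i hi; simp only [Finset.mem_Icc] at hi ⊢; omega
    · intro n hn; simp only [Finset.mem_Icc] at hn; show -(n.natAbs:ℤ) = n; omega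
    · intro i hi; simp only [Finset.mem_Icc] at hi; show (-(i:ℤ)).natAbs = i; omega
    · intro n hn; exact habs n
  have h2 : ∑ n ∈ Finset.Icc (0:ℤ) (M:ℤ), (1 + (|n|:ℝ))⁻¹
      = ∑ i ∈ Finset.range (M+1), (1 + (i:ℝ))⁻¹ := by
    refine Finset.sum_nbij' (fun n => n.toNat) (fun i => (i:ℤ)) ?_ ?_ ?_ ?_ ?_
    · intro n hn; simp only [Finset.mem_Icc, Finset.mem_range] at hn ⊢; omega
    · intro i hi; simp only [Finset.mem_Icc, Finset.mem_range] at hi ⊢; omega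
    · intro n hn; simp only [Finset.mem_Icc] at hn; show ((n.toNat:ℤ)) = n; omega
    · intro i hi; simp
    · intro n hn; simp only [Finset.mem_Icc] at hn
      rw [habs]
      have hna : n.natAbs = n.toNat := by omega
      rw [hna]
  have h1' : ∑ i ∈ Finset.Icc 1 M, (1 + (i:ℝ))⁻¹
      ≤ ∑ i ∈ Finset.range (M+1), (1 + (i:ℝ))⁻¹ := by
    apply Finset.sum_le_sum_of_subset_of_nonneg
    · intro i hi; simp only [Finset.mem_Icc] at hi; simp only [Finset.mem_range]; omega
    · intro i _ _; positivity
  have hlogM : Real.log 2 ≤ Real.log M := Real.log_le_log (by norm_num) (by exact_mod_cast hM)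
  have hlog2 : (0.6931471803 : ℝ) < Real.log 2 := Real.log_two_gt_d9
  have hlogM1 : Real.log ((M:ℝ)+1) ≤ 2 * Real.log M := by
    rw [show (2:ℝ) * Real.log M = Real.log ((M:ℝ)^2) by rw [Real.log_pow]; push_cast; ring]
    apply Real.log_le_log (by positivity)
    have : 2 ≤ (M:ℝ) := by exact_mod_cast hM
    nlinarith
  rw [h1, h2]
  push_cast at hharm ⊢
  nlinarith [h1', hharm, hlogM, hlog2, hlogM1]

set_option maxHeartbeats 1000000 in

lemma aux_sqrt_sum (L : ℕ) :
    ∑ j ∈ Finset.Icc (1:ℤ) (L:ℤ), ((j:ℝ)) ^ (-(1/2) : ℝ) ≤ 2 * Real.sqrt L := by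
  induction L with
  | zero => simp
  | succ L ih =>
    have hins : Finset.Icc (1:ℤ) ((L+1:ℕ):ℤ) = insert ((L+1:ℕ):ℤ) (Finset.Icc (1:ℤ) (L:ℤ)) := by
      ext x; simp; omega
    rw [hins, Finset.sum_insert (by simp)]
    have hL1 : (0:ℝ) < (L:ℝ) + 1 := by positivity
    have hv : Real.sqrt ((L:ℝ)+1) > 0 := Real.sqrt_pos.mpr hL1
    have hrw : (((L+1:ℕ):ℤ):ℝ) ^ (-(1/2) : ℝ) = (Real.sqrt ((L:ℝ)+1))⁻¹ := by
      rw [Real.rpow_neg (by push_cast; positivity)]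
      rw [show (((L+1:ℕ):ℤ):ℝ) = (L:ℝ)+1 by push_cast; ring]
      rw [← Real.sqrt_eq_rpow]
    rw [hrw]
    have hcast : Real.sqrt ((L+1:ℕ):ℝ) = Real.sqrt ((L:ℝ)+1) := by push_cast; ring_nf
    rw [hcast]
    set u := Real.sqrt (L:ℝ) with hu
    set v := Real.sqrt ((L:ℝ)+1) with hvv
    have hu0 : 0 ≤ u := Real.sqrt_nonneg _
    have hu2 : u^2 = (L:ℝ) := Real.sq_sqrt (by positivity)
    have hv2 : v^2 = (L:ℝ)+1 := Real.sq_sqrt (by positivity)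
    have key : v⁻¹ + 2*u ≤ 2*v := by
      rw [inv_eq_one_div, div_add' _ _ _ (ne_of_gt hv), div_le_iff₀ hv]
      nlinarith [sq_nonneg (u-v)]
    calc v⁻¹ + ∑ j ∈ Finset.Icc (1:ℤ) (L:ℤ), ((j:ℝ)) ^ (-(1/2) : ℝ) ≤ v⁻¹ + 2*u := by linarith
    _ ≤ 2*v := key

set_option maxHeartbeats 1000000 in
lemma aux_inner (ε₀ : ℝ) (hε : 0 < ε₀) (X : ℝ) (hX : 1 < X)
    (a : ℕ → ℂ) (ha : ∀ m : ℕ, ‖a m‖ ≤ (m : ℝ) ^ ((1 : ℝ) / 2 + ε₀))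
    (M : ℕ) (hM : 2 ≤ M) (s n : ℤ) (hs : s = 1 ∨ s = -1) (hn : 2 * |n| ≤ (M:ℤ)) :
    ‖∑ m ∈ (Finset.Icc 1 ⌊X⌋₊).filter
        (fun m : ℕ => (m : ℤ) ≡ s * n [ZMOD (M : ℤ)] ∧ (m : ℤ) ≠ s * n),
      a m / (m : ℂ)‖ ≤ 5 * X ^ ((1:ℝ)/2 + ε₀) / M := by
  classical
  set S := (Finset.Icc 1 ⌊X⌋₊).filter
      (fun m : ℕ => (m : ℤ) ≡ s * n [ZMOD (M : ℤ)] ∧ (m : ℤ) ≠ s * n) with hS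
  set L : ℕ := ⌊X⌋₊ / M + 1 with hL
  set l : ℕ → ℤ := fun m => ((m:ℤ) - s*n) / (M:ℤ) with hl
  have hMpos : (0:ℤ) < (M:ℤ) := by exact_mod_cast (by omega : 0 < M)
  have hsn : s*n ≤ |n| ∧ -|n| ≤ s*n := by
    rcases hs with h | h <;> subst h <;> constructor <;>
      simp [neg_le_abs, le_abs_self, abs_le, neg_abs_le]
  -- facts for m ∈ S
  have hfacts : ∀ m ∈ S, (M:ℤ) * l m = (m:ℤ) - s*n ∧ 1 ≤ l m ∧ l m ≤ (L:ℤ)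
      ∧ (M:ℤ) * l m ≤ 2*m := by
    intro m hm
    rw [hS, Finset.mem_filter, Finset.mem_Icc] at hm
    obtain ⟨⟨hm1, hm2⟩, hmod, hne⟩ := hm
    have hd : (M:ℤ) ∣ (m:ℤ) - s*n := Int.ModEq.dvd hmod.symm
    have heq : (M:ℤ) * l m = (m:ℤ) - s*n := Int.mul_ediv_cancel' hd
    have hm1' : (1:ℤ) ≤ (m:ℤ) := by exact_mod_cast hm1
    have hl1 : 1 ≤ l m := by
      rcases lt_trichotomy (l m) 0 with h | h | h
      · exfalso; nlinarith [hsn.1, hsn.2, hn]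
      · exfalso; apply hne; rw [h, mul_zero] at heq; omega
      · omega
    have hup : (M:ℤ) * l m ≤ 2*m := by nlinarith [hsn.1, hsn.2, hn]
    have hdm := Nat.div_add_mod ⌊X⌋₊ M
    have hmod' : ⌊X⌋₊ % M < M := Nat.mod_lt _ (by omega)
    have hLe : l m ≤ (L:ℤ) := by
      have hq : ((⌊X⌋₊:ℤ)) = (M:ℤ) * ((⌊X⌋₊/M : ℕ):ℤ) + ((⌊X⌋₊ % M : ℕ):ℤ) := by
        exact_mod_cast hdm.symm
      have hm2' : (m:ℤ) ≤ (⌊X⌋₊:ℤ) := by exact_mod_cast hm2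
      have hmod'' : ((⌊X⌋₊ % M : ℕ):ℤ) < (M:ℤ) := by exact_mod_cast hmod'
      have hLcast : (L:ℤ) = ((⌊X⌋₊/M : ℕ):ℤ) + 1 := by exact_mod_cast rfl
      by_contra hcon
      push_neg at hcon
      have : (L:ℤ) + 1 ≤ l m := by omega
      nlinarith [hsn.1, hsn.2, hn]
    exact ⟨heq, hl1, hLe, hup⟩
  have hXpos : (0:ℝ) < X := by linarith
  have hnorm : ‖∑ m ∈ S, a m / (m:ℂ)‖ ≤ ∑ m ∈ S, ‖a m / (m:ℂ)‖ := norm_sum_le _ _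
  rcases S.eq_empty_or_nonempty with hemp | ⟨m₀, hm₀⟩
  · rw [hemp]; simp; positivity
  -- nonempty gives M ≤ 2X
  have hM2X : (M:ℝ) ≤ 2*X := by
    obtain ⟨heq, hl1, _, hup⟩ := hfacts m₀ hm₀
    have h1 : (M:ℤ) ≤ 2*m₀ := by nlinarith
    have h2 : (m₀:ℝ) ≤ X := by
      rw [hS, Finset.mem_filter, Finset.mem_Icc] at hm₀
      exact le_trans (by exact_mod_cast hm₀.1.2 : (m₀:ℝ) ≤ (⌊X⌋₊:ℝ)) (Nat.floor_le hXpos.le)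
    have h1' : (M:ℝ) ≤ 2*(m₀:ℝ) := by exact_mod_cast h1
    linarith
  -- pointwise bound
  have hMr2 : (2:ℝ) ≤ (M:ℝ) := by exact_mod_cast hM
  have hpt : ∀ m ∈ S, ‖a m / (m:ℂ)‖ ≤
      X ^ ε₀ * (((M:ℝ)/2) ^ (-(1/2) : ℝ) * ((l m : ℝ)) ^ (-(1/2) : ℝ)) := by
    intro m hm
    obtain ⟨heq, hl1, hLe, hup⟩ := hfacts m hm
    rw [hS, Finset.mem_filter, Finset.mem_Icc] at hm
    obtain ⟨⟨hm1, hm2⟩, _, _⟩ := hm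
    have hmpos : (0:ℝ) < (m:ℝ) := by exact_mod_cast hm1
    have hmX : (m:ℝ) ≤ X :=
      le_trans (by exact_mod_cast hm2 : (m:ℝ) ≤ (⌊X⌋₊:ℝ)) (Nat.floor_le hXpos.le)
    have hlr : (1:ℝ) ≤ (l m : ℝ) := by exact_mod_cast hl1
    have hml : ((M:ℝ)/2) * (l m : ℝ) ≤ (m:ℝ) := by
      have : ((M:ℤ) * l m : ℝ) ≤ 2*(m:ℝ) := by exact_mod_cast hup
      push_cast at this
      linarith
    have hmlpos : (0:ℝ) < ((M:ℝ)/2) * (l m : ℝ) := by positivity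
    have h1 : ‖a m / (m:ℂ)‖ ≤ (m:ℝ) ^ ((1:ℝ)/2 + ε₀) / m := by
      rw [norm_div, Complex.norm_natCast]
      gcongr
      exact ha m
    have h2 : (m:ℝ) ^ ((1:ℝ)/2 + ε₀) / m = (m:ℝ) ^ ε₀ * (m:ℝ) ^ (-(1/2) : ℝ) := by
      rw [show (m:ℝ) ^ ε₀ * (m:ℝ) ^ (-(1/2) : ℝ) = (m:ℝ) ^ (ε₀ + (-(1/2):ℝ)) from
        (Real.rpow_add hmpos _ _).symm]
      rw [show (ε₀ + (-(1/2):ℝ)) = ((1:ℝ)/2 + ε₀) - 1 by ring]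
      rw [Real.rpow_sub hmpos, Real.rpow_one]
    have h3 : (m:ℝ) ^ ε₀ ≤ X ^ ε₀ := Real.rpow_le_rpow hmpos.le hmX hε.le
    have h4 : (m:ℝ) ^ (-(1/2) : ℝ) ≤ (((M:ℝ)/2) * (l m : ℝ)) ^ (-(1/2) : ℝ) :=
      Real.rpow_le_rpow_of_nonpos hmlpos hml (by norm_num)
    have h5 : (((M:ℝ)/2) * (l m : ℝ)) ^ (-(1/2) : ℝ)
        = ((M:ℝ)/2) ^ (-(1/2) : ℝ) * ((l m : ℝ)) ^ (-(1/2) : ℝ) :=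
      Real.mul_rpow (by positivity) (by linarith)
    calc ‖a m / (m:ℂ)‖ ≤ (m:ℝ) ^ ((1:ℝ)/2 + ε₀) / m := h1
      _ = (m:ℝ) ^ ε₀ * (m:ℝ) ^ (-(1/2) : ℝ) := h2
      _ ≤ X ^ ε₀ * (((M:ℝ)/2) * (l m : ℝ)) ^ (-(1/2) : ℝ) := by
          apply mul_le_mul h3 h4 (Real.rpow_nonneg hmpos.le _) (by positivity)
      _ = X ^ ε₀ * (((M:ℝ)/2) ^ (-(1/2) : ℝ) * ((l m : ℝ)) ^ (-(1/2) : ℝ)) := by rw [h5]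
  -- sum the pointwise bounds and reindex
  have hinj : ∀ x ∈ S, ∀ y ∈ S, l x = l y → x = y := by
    intro x hx y hy hxy
    have h1 := (hfacts x hx).1
    have h2 := (hfacts y hy).1
    rw [hxy] at h1
    have : (x:ℤ) = (y:ℤ) := by omega
    exact_mod_cast this
  have himg : S.image l ⊆ Finset.Icc (1:ℤ) (L:ℤ) := by
    intro j hj
    rw [Finset.mem_image] at hj
    obtain ⟨m, hm, rfl⟩ := hj
    obtain ⟨_, hl1, hLe, _⟩ := hfacts m hm
    rw [Finset.mem_Icc]; exact ⟨hl1, hLe⟩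
  have hsum1 : ∑ m ∈ S, ((l m : ℝ)) ^ (-(1/2) : ℝ) ≤ 2 * Real.sqrt L := by
    have hsi := Finset.sum_image (f := fun j : ℤ => ((j:ℝ)) ^ (-(1/2) : ℝ)) (g := l) (s := S) hinj
    rw [← hsi]
    refine le_trans (Finset.sum_le_sum_of_subset_of_nonneg himg ?_) (aux_sqrt_sum L)
    intro j hj _
    rw [Finset.mem_Icc] at hj
    exact Real.rpow_nonneg (by exact_mod_cast le_trans zero_le_one hj.1) _
  have hc0 : (0:ℝ) ≤ X ^ ε₀ * ((M:ℝ)/2) ^ (-(1/2) : ℝ) := by positivity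
  have htot : ∑ m ∈ S, ‖a m / (m:ℂ)‖ ≤
      X ^ ε₀ * ((M:ℝ)/2) ^ (-(1/2) : ℝ) * (2 * Real.sqrt L) := by
    calc ∑ m ∈ S, ‖a m / (m:ℂ)‖
        ≤ ∑ m ∈ S, X ^ ε₀ * (((M:ℝ)/2) ^ (-(1/2) : ℝ) * ((l m : ℝ)) ^ (-(1/2) : ℝ)) :=
          Finset.sum_le_sum hpt
      _ = X ^ ε₀ * ((M:ℝ)/2) ^ (-(1/2) : ℝ) * ∑ m ∈ S, ((l m : ℝ)) ^ (-(1/2) : ℝ) := by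
          rw [Finset.mul_sum]; apply Finset.sum_congr rfl; intro m _; ring
      _ ≤ X ^ ε₀ * ((M:ℝ)/2) ^ (-(1/2) : ℝ) * (2 * Real.sqrt L) := by
          apply mul_le_mul_of_nonneg_left hsum1 hc0
  -- final numeric bound
  have hLM : (L:ℝ) * M ≤ 3 * X := by
    have h1 : ((⌊X⌋₊ / M : ℕ) : ℝ) ≤ (⌊X⌋₊ : ℝ) / (M:ℝ) := Nat.cast_div_le
    have h2 : (⌊X⌋₊ : ℝ) ≤ X := Nat.floor_le hXpos.le
    have hLr : (L:ℝ) = ((⌊X⌋₊ / M : ℕ) : ℝ) + 1 := by exact_mod_cast rfl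
    have hMrpos : (0:ℝ) < (M:ℝ) := by linarith
    have : (L:ℝ) ≤ X / M + 1 := by
      rw [hLr]
      have : (⌊X⌋₊ : ℝ) / (M:ℝ) ≤ X / M := by gcongr
      linarith
    calc (L:ℝ) * M ≤ (X / M + 1) * M := by nlinarith
      _ = X + M := by field_simp
      _ ≤ 3 * X := by linarith
  set p := Real.sqrt ((M:ℝ)/2) with hp
  set q := Real.sqrt (L:ℝ) with hq
  set r := Real.sqrt X with hr
  have hp2 : p^2 = (M:ℝ)/2 := Real.sq_sqrt (by linarith)
  have hq2 : q^2 = (L:ℝ) := Real.sq_sqrt (by positivity)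
  have hr2 : r^2 = X := Real.sq_sqrt hXpos.le
  have hppos : 0 < p := Real.sqrt_pos.mpr (by linarith)
  have hq0 : 0 ≤ q := Real.sqrt_nonneg _
  have hrpos : 0 < r := Real.sqrt_pos.mpr hXpos
  have hMrpos : (0:ℝ) < (M:ℝ) := by linarith
  have hrphalf : ((M:ℝ)/2) ^ (-(1/2) : ℝ) = p⁻¹ := by
    rw [Real.rpow_neg (by linarith), ← Real.sqrt_eq_rpow]
  have key2 : 2 * q * (M:ℝ) ≤ 5 * (p * r) := by
    have h1 : (2*q*(M:ℝ))^2 ≤ (5*(p*r))^2 := by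
      have hh := mul_le_mul_of_nonneg_left hLM (by positivity : (0:ℝ) ≤ 4*(M:ℝ))
      have e1 : (2*q*(M:ℝ))^2 = 4*((L:ℝ)*(M:ℝ))*(M:ℝ) := by
        calc (2*q*(M:ℝ))^2 = 4*q^2*(M:ℝ)^2 := by ring
          _ = 4*((L:ℝ)*(M:ℝ))*(M:ℝ) := by rw [hq2]; ring
      have e2 : (5*(p*r))^2 = 25*((M:ℝ)/2)*X := by
        calc (5*(p*r))^2 = 25*p^2*r^2 := by ring
          _ = 25*((M:ℝ)/2)*X := by rw [hp2, hr2]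
      nlinarith [hh, e1, e2, mul_nonneg hMrpos.le hXpos.le]
    have ht0 : (0:ℝ) ≤ 2*q*(M:ℝ) := by positivity
    have hs0 : (0:ℝ) ≤ 5*(p*r) := by positivity
    have h2 := Real.sqrt_le_sqrt h1
    rwa [Real.sqrt_sq ht0, Real.sqrt_sq hs0] at h2
  have key3 : p⁻¹ * (2 * q) ≤ 5 * r / M := by
    rw [inv_mul_le_iff₀ hppos, mul_comm p (5*r/M)]
    rw [div_mul_eq_mul_div, le_div_iff₀ hMrpos]
    linarith
  have hXsplit : X ^ ((1:ℝ)/2 + ε₀) = r * X ^ ε₀ := by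
    rw [Real.rpow_add hXpos, ← Real.sqrt_eq_rpow]
  have hfin : X ^ ε₀ * ((M:ℝ)/2) ^ (-(1/2) : ℝ) * (2 * Real.sqrt L)
      ≤ 5 * X ^ ((1:ℝ)/2 + ε₀) / M := by
    rw [hrphalf, hXsplit]
    have hXe : (0:ℝ) < X ^ ε₀ := Real.rpow_pos_of_pos hXpos _
    calc X ^ ε₀ * p⁻¹ * (2 * q) = X ^ ε₀ * (p⁻¹ * (2*q)) := by ring
      _ ≤ X ^ ε₀ * (5 * r / M) := by apply mul_le_mul_of_nonneg_left key3 hXe.le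
      _ = 5 * (r * X ^ ε₀) / M := by ring
  exact le_trans hnorm (le_trans htot hfin)


theorem stmt17 :
    ∃ C : ℝ, 0 < C ∧
      ∀ ε₀ : ℝ, 0 < ε₀ → ε₀ < 1 / 4 →
      ∀ a : ℕ → ℂ, (∀ m : ℕ, ‖a m‖ ≤ (m : ℝ) ^ ((1 : ℝ) / 2 + ε₀)) →
      ∀ M : ℕ, 2 ≤ M →
      ∀ X : ℝ, 1 < X →
      ∀ hhat : ℤ → ℂ, (∀ n : ℤ, ‖hhat n‖ ≤ 1 / (1 + (|n| : ℝ))) →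
      ∀ s : ℤ, (s = 1 ∨ s = -1) →
        ‖∑ n ∈ (Finset.Icc (-(M : ℤ)) (M : ℤ)).filter (fun n => 2 * |n| ≤ (M : ℤ)),
            hhat n *
              ∑ m ∈ (Finset.Icc 1 ⌊X⌋₊).filter
                  (fun m : ℕ => (m : ℤ) ≡ s * n [ZMOD (M : ℤ)] ∧ (m : ℤ) ≠ s * n),
                a m / (m : ℂ)‖
          ≤ C * X ^ ((1 : ℝ) / 2 + 2 * ε₀) * (M : ℝ)⁻¹ * Real.log M := by
  refine ⟨40, by norm_num, ?_⟩
  intro ε₀ hε hε4 a ha M hM X hX hhat hhat_bd s hs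
  have hXpos : (0:ℝ) < X := by linarith
  have hMrpos : (0:ℝ) < (M:ℝ) := by exact_mod_cast (by omega : 0 < M)
  have hinner : ∀ n : ℤ, 2 * |n| ≤ (M:ℤ) →
      ‖∑ m ∈ (Finset.Icc 1 ⌊X⌋₊).filter
          (fun m : ℕ => (m : ℤ) ≡ s * n [ZMOD (M : ℤ)] ∧ (m : ℤ) ≠ s * n),
        a m / (m : ℂ)‖ ≤ 5 * X ^ ((1:ℝ)/2 + ε₀) / M := fun n hn =>
    aux_inner ε₀ hε X hX a ha M hM s n hs hn
  set T := (Finset.Icc (-(M : ℤ)) (M : ℤ)).filter (fun n => 2 * |n| ≤ (M : ℤ)) with hT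
  have hB0 : (0:ℝ) ≤ 5 * X ^ ((1:ℝ)/2 + ε₀) / M := by positivity
  have step1 : ‖∑ n ∈ T, hhat n * ∑ m ∈ (Finset.Icc 1 ⌊X⌋₊).filter
        (fun m : ℕ => (m : ℤ) ≡ s * n [ZMOD (M : ℤ)] ∧ (m : ℤ) ≠ s * n), a m / (m : ℂ)‖
      ≤ ∑ n ∈ T, (1 + (|n|:ℝ))⁻¹ * (5 * X ^ ((1:ℝ)/2 + ε₀) / M) := by
    refine le_trans (norm_sum_le _ _) (Finset.sum_le_sum ?_)
    intro n hn
    rw [hT, Finset.mem_filter] at hn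
    rw [norm_mul]
    have h1 : ‖hhat n‖ ≤ (1 + (|n|:ℝ))⁻¹ := by
      rw [← one_div]; exact hhat_bd n
    exact mul_le_mul h1 (hinner n hn.2) (norm_nonneg _) (by positivity)
  have step2 : ∑ n ∈ T, (1 + (|n|:ℝ))⁻¹ * (5 * X ^ ((1:ℝ)/2 + ε₀) / M)
      ≤ (8 * Real.log M) * (5 * X ^ ((1:ℝ)/2 + ε₀) / M) := by
    rw [← Finset.sum_mul]
    apply mul_le_mul_of_nonneg_right _ hB0
    refine le_trans (Finset.sum_le_sum_of_subset_of_nonneg (Finset.filter_subset _ _) ?_)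
      (aux_harm M hM)
    intro i _ _; positivity
  have hrpow : X ^ ((1:ℝ)/2 + ε₀) ≤ X ^ ((1:ℝ)/2 + 2*ε₀) :=
    Real.rpow_le_rpow_of_exponent_le hX.le (by linarith)
  have hlogpos : (0:ℝ) < Real.log M := Real.log_pos (by exact_mod_cast (by omega : 1 < M))
  calc ‖∑ n ∈ T, hhat n * ∑ m ∈ (Finset.Icc 1 ⌊X⌋₊).filter
        (fun m : ℕ => (m : ℤ) ≡ s * n [ZMOD (M : ℤ)] ∧ (m : ℤ) ≠ s * n), a m / (m : ℂ)‖
      ≤ (8 * Real.log M) * (5 * X ^ ((1:ℝ)/2 + ε₀) / M) := le_trans step1 step2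
    _ = 40 * X ^ ((1:ℝ)/2 + ε₀) * (M:ℝ)⁻¹ * Real.log M := by field_simp; ring
    _ ≤ 40 * X ^ ((1:ℝ)/2 + 2*ε₀) * (M:ℝ)⁻¹ * Real.log M := by
        have : (0:ℝ) ≤ (M:ℝ)⁻¹ * Real.log M := by positivity
        nlinarith [hrpow, hlogpos, hMrpos]
    _ = 40 * X ^ ((1:ℝ)/2 + 2*ε₀) * (M:ℝ)⁻¹ * Real.log M := rfl
end
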